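/- Let (x_i, y_i, D_i), i = 1,…,n, be data with D_i ∈ {0,1}, x_i ∈ ℝ^d, y_i ∈ ℝ^q. Fix α_p ∈ ℝ, β ∈ ℝ^d, γ ∈ ℝ and set η_i = α_p + βᵀx_i + γ·(y_iᵀ1). Let v be a random vector in ℝ^q with i.i.d. components having mean 0 and variance 2, with E[|y_iᵀv|³] < ∞ for all i, and define g_i(θ) = E[π(η_i + √θ · y_iᵀv)] for θ ≥ 0. Then the prospective log-likelihood ℓ(θ) = ∑_{i=1}^n [D_i log g_i(θ) + (1−D_i) log(1−g_i(θ))] has right derivative at θ = 0 equal to ∑_{i=1}^n (D_i − π(η_i)) (1 − 2π(η_i)) · y_iᵀy_i. -/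

import Mathlib

open MeasureTheory ProbabilityTheory BigOperators Real Filter Topology

noncomputable def sig (s : ℝ) : ℝ := Real.exp s / (1 + Real.exp s)
noncomputable def sig1 (s : ℝ) : ℝ := sig s * (1 - sig s)
noncomputable def sig2 (s : ℝ) : ℝ := sig1 s * (1 - 2 * sig s)
noncomputable def sig3 (s : ℝ) : ℝ := sig2 s * (1 - 2 * sig s) - 2 * sig1 s ^ 2

lemma one_add_exp_pos (s : ℝ) : 0 < 1 + Real.exp s := by positivity

lemma sig_pos (s : ℝ) : 0 < sig s := div_pos (exp_pos s) (one_add_exp_pos s)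

lemma sig_lt_one (s : ℝ) : sig s < 1 :=
  (div_lt_one (one_add_exp_pos s)).2 (by linarith [exp_pos s])

lemma continuous_sig : Continuous sig :=
  continuous_exp.div (continuous_const.add continuous_exp) (fun s => (one_add_exp_pos s).ne')

lemma hasDerivAt_sig (s : ℝ) : HasDerivAt sig (sig1 s) s := by
  have hd : HasDerivAt (fun y => 1 + Real.exp y) (Real.exp s) s := by
    exact (Real.hasDerivAt_exp s).const_add 1
  have h : HasDerivAt sig ((Real.exp s * (1 + Real.exp s) - Real.exp s * Real.exp s) /
      (1 + Real.exp s) ^ 2) s :=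
    (Real.hasDerivAt_exp s).div hd (one_add_exp_pos s).ne'
  convert h using 1
  have hne := (one_add_exp_pos s).ne'
  simp only [sig1, sig]
  field_simp

lemma hasDerivAt_sig1 (s : ℝ) : HasDerivAt sig1 (sig2 s) s := by
  have h := ((hasDerivAt_sig s).mul ((hasDerivAt_const s 1).sub (hasDerivAt_sig s)))
  refine h.congr_deriv ?_
  simp only [sig2, sig1, Pi.sub_apply]
  ring

lemma hasDerivAt_sig2 (s : ℝ) : HasDerivAt sig2 (sig3 s) s := by
  have h := ((hasDerivAt_sig1 s).mul ((hasDerivAt_const s 1).sub ((hasDerivAt_sig s).const_mul 2)))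
  refine h.congr_deriv ?_
  simp only [sig3, sig2, sig1, Pi.sub_apply]
  ring

lemma sig1_bounds (s : ℝ) : 0 ≤ sig1 s ∧ sig1 s ≤ 1/4 := by
  have h1 := sig_pos s; have h2 := sig_lt_one s
  simp only [sig1]
  constructor
  · exact mul_nonneg h1.le (by linarith)
  · nlinarith [sq_nonneg (sig s - 1/2)]

lemma abs_one_sub_two_sig (s : ℝ) : |1 - 2 * sig s| ≤ 1 := by
  have h1 := sig_pos s; have h2 := sig_lt_one s
  rw [abs_le]; constructor <;> linarith

lemma abs_sig2_le (s : ℝ) : |sig2 s| ≤ 1/4 := by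
  have := sig1_bounds s
  calc |sig2 s| = |sig1 s| * |1 - 2 * sig s| := abs_mul _ _
    _ ≤ (1/4) * 1 := by
        apply mul_le_mul (by rw [abs_of_nonneg this.1]; exact this.2) (abs_one_sub_two_sig s)
          (abs_nonneg _) (by norm_num)
    _ = 1/4 := by norm_num

lemma abs_sig3_le (s : ℝ) : |sig3 s| ≤ 1 := by
  have h1 := sig1_bounds s; have h2 := abs_sig2_le s; have h3 := abs_one_sub_two_sig s
  have : |sig2 s * (1 - 2 * sig s)| ≤ 1/4 := by
    rw [abs_mul]
    calc |sig2 s| * |1 - 2 * sig s| ≤ (1/4) * 1 :=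
      mul_le_mul h2 h3 (abs_nonneg _) (by norm_num)
      _ = 1/4 := by norm_num
  have h4 : |2 * sig1 s ^ 2| ≤ 1/8 := by
    rw [abs_mul, abs_pow, abs_of_nonneg h1.1]
    have : sig1 s ^ 2 ≤ (1/4)^2 := pow_le_pow_left₀ h1.1 h1.2 2
    rw [abs_two]; nlinarith
  calc |sig3 s| ≤ |sig2 s * (1 - 2 * sig s)| + |2 * sig1 s ^ 2| := abs_sub _ _
    _ ≤ 1/4 + 1/8 := add_le_add this h4
    _ ≤ 1 := by norm_num

/-- MVT-style bound: if `f 0 = 0` and `|f' t| ≤ |t|^k` everywhere, then `|f u| ≤ |u|^(k+1)`. -/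
lemma grow_bound {f f' : ℝ → ℝ} (hd : ∀ t, HasDerivAt f (f' t) t) (h0 : f 0 = 0)
    {k : ℕ} (hb : ∀ t, |f' t| ≤ |t| ^ k) (u : ℝ) : |f u| ≤ |u| ^ (k + 1) := by
  have hconv : Convex ℝ (Set.uIcc (0:ℝ) u) := convex_uIcc _ _
  have key : ‖f u - f 0‖ ≤ |u| ^ k * ‖u - 0‖ := by
    apply hconv.norm_image_sub_le_of_norm_hasDerivWithin_le
      (fun t _ => (hd t).hasDerivWithinAt) ?_ (Set.left_mem_uIcc) (Set.right_mem_uIcc)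
    intro t ht
    have : |t| ≤ |u| := by
      rcases Set.mem_uIcc.1 ht with ⟨ha, hb2⟩ | ⟨ha, hb2⟩
      · rw [abs_of_nonneg ha]; exact hb2.trans (le_abs_self u)
      · rw [abs_of_nonpos hb2]; linarith [neg_abs_le u]
    calc ‖f' t‖ ≤ |t| ^ k := hb t
      _ ≤ |u| ^ k := pow_le_pow_left₀ (abs_nonneg t) this k
  rw [h0, sub_zero, sub_zero] at key
  calc ‖f u‖ ≤ |u| ^ k * |u| := key
    _ = |u| ^ (k+1) := by rw [pow_succ]
  
lemma sig_taylor (a u : ℝ) :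
    |sig (a + u) - sig a - sig1 a * u - sig2 a / 2 * u ^ 2| ≤ |u| ^ 3 := by
  -- h2 t = sig2 (a+t) - sig2 a, |h2 t| ≤ |t|
  have d2 : ∀ t : ℝ, HasDerivAt (fun t => sig2 (a + t) - sig2 a) (sig3 (a + t)) t := by
    intro t
    have := (hasDerivAt_sig2 (a + t)).comp t ((hasDerivAt_id t).const_add a)
    simpa using this.sub_const (sig2 a)
  have b2 : ∀ t : ℝ, |sig2 (a + t) - sig2 a| ≤ |t| ^ 1 := fun t =>
    grow_bound (k := 0) d2 (by simp) (fun t => by simpa using abs_sig3_le (a + t)) t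
  have d1 : ∀ t : ℝ, HasDerivAt (fun t => sig1 (a + t) - sig1 a - sig2 a * t)
      (sig2 (a + t) - sig2 a) t := by
    intro t
    have h1 := (hasDerivAt_sig1 (a + t)).comp t ((hasDerivAt_id t).const_add a)
    have := (h1.sub_const (sig1 a)).sub ((hasDerivAt_id t).const_mul (sig2 a))
    exact this.congr_deriv (by ring)
  have b1 : ∀ t : ℝ, |sig1 (a + t) - sig1 a - sig2 a * t| ≤ |t| ^ 2 := fun t =>
    grow_bound (k := 1) d1 (by simp) b2 t
  have d0 : ∀ t : ℝ, HasDerivAt (fun t => sig (a + t) - sig a - sig1 a * t - sig2 a / 2 * t ^ 2)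
      (sig1 (a + t) - sig1 a - sig2 a * t) t := by
    intro t
    have h1 := (hasDerivAt_sig (a + t)).comp t ((hasDerivAt_id t).const_add a)
    have hsq : HasDerivAt (fun t : ℝ => sig2 a / 2 * t ^ 2) (sig2 a / 2 * (2 * t)) t := by
      exact (hasDerivAt_pow 2 t).const_mul (sig2 a / 2) |>.congr_deriv (by ring)
    have := ((h1.sub_const (sig a)).sub ((hasDerivAt_id t).const_mul (sig1 a))).sub hsq
    exact this.congr_deriv (by ring)
  exact grow_bound (k := 2) d0 (by simp) b1 u
section moments
variable {Ω : Type*} [MeasurableSpace Ω] {μ : Measure Ω} [IsProbabilityMeasure μ]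

lemma int_sq_of_var {f : Ω → ℝ} (h : ∫ ω, (f ω) ^ 2 ∂μ = 2) :
    Integrable (fun ω => (f ω) ^ 2) μ := by
  by_contra hc
  rw [integral_undef hc] at h
  norm_num at h

lemma int_of_int_sq {f : Ω → ℝ} (hm : Measurable f) (h : Integrable (fun ω => (f ω) ^ 2) μ) :
    Integrable f μ := by
  apply (h.add (integrable_const 1)).mono' hm.aestronglyMeasurable
  filter_upwards with ω
  have : |f ω| ≤ (f ω) ^ 2 + 1 := by nlinarith [sq_nonneg (|f ω| - 1), sq_abs (f ω)]
  simpa using this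

lemma int_mul_sq {f h : Ω → ℝ} (hmf : Measurable f) (hmh : Measurable h)
    (hf : Integrable (fun ω => (f ω) ^ 2) μ) (hh : Integrable (fun ω => (h ω) ^ 2) μ) :
    Integrable (fun ω => f ω * h ω) μ := by
  apply (hf.add hh).mono' (hmf.mul hmh).aestronglyMeasurable
  filter_upwards with ω
  have : |f ω| * |h ω| ≤ (f ω) ^ 2 + (h ω) ^ 2 := by
    nlinarith [sq_nonneg (|f ω| - |h ω|), sq_abs (f ω), sq_abs (h ω), abs_nonneg (f ω),
      abs_nonneg (h ω)]
  simpa using this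

lemma moments {q : ℕ} (v : Fin q → Ω → ℝ)
    (hmeas : ∀ j, Measurable (v j))
    (hindep : iIndepFun v μ)
    (hmean : ∀ j, ∫ ω, v j ω ∂μ = 0)
    (hvar : ∀ j, ∫ ω, (v j ω) ^ 2 ∂μ = 2) (c : Fin q → ℝ) :
    Integrable (fun ω => ∑ j, c j * v j ω) μ ∧
    Integrable (fun ω => (∑ j, c j * v j ω) ^ 2) μ ∧
    (∫ ω, ∑ j, c j * v j ω ∂μ = 0) ∧
    (∫ ω, (∑ j, c j * v j ω) ^ 2 ∂μ = 2 * ∑ j, (c j) ^ 2) := by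
  have hsq : ∀ j, Integrable (fun ω => (v j ω) ^ 2) μ := fun j => int_sq_of_var (hvar j)
  have hint : ∀ j, Integrable (v j) μ := fun j => int_of_int_sq (hmeas j) (hsq j)
  have hprod : ∀ j k, Integrable (fun ω => v j ω * v k ω) μ := fun j k =>
    int_mul_sq (hmeas j) (hmeas k) (hsq j) (hsq k)
  have hIjk : ∀ j k, ∫ ω, v j ω * v k ω ∂μ = if j = k then 2 else 0 := by
    intro j k
    by_cases hjk : j = k
    · subst hjk; simp [← sq, hvar j]
    · have hind := hindep.indepFun hjk
      have := hind.integral_mul_eq_mul_integral (hint j).aestronglyMeasurable (hint k).aestronglyMeasurable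
      simp only [if_neg hjk]
      calc ∫ ω, v j ω * v k ω ∂μ = ∫ ω, (v j * v k) ω ∂μ := rfl
        _ = (∫ ω, v j ω ∂μ) * ∫ ω, v k ω ∂μ := this
        _ = 0 := by rw [hmean j, hmean k]; ring
  have hI1 : Integrable (fun ω => ∑ j, c j * v j ω) μ :=
    integrable_finset_sum _ (fun j _ => (hint j).const_mul (c j))
  have hexp : (fun ω => (∑ j, c j * v j ω) ^ 2) =
      fun ω => ∑ j, ∑ k, (c j * c k) * (v j ω * v k ω) := by
    funext ω
    rw [sq, Finset.sum_mul_sum]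
    exact Finset.sum_congr rfl fun j _ => Finset.sum_congr rfl fun k _ => by ring
  have hI2 : Integrable (fun ω => (∑ j, c j * v j ω) ^ 2) μ := by
    rw [hexp]
    exact integrable_finset_sum _ fun j _ =>
      integrable_finset_sum _ fun k _ => (hprod j k).const_mul _
  refine ⟨hI1, hI2, ?_, ?_⟩
  · rw [integral_finset_sum _ (fun j _ => (hint j).const_mul (c j))]
    simp only [integral_const_mul]
    simp [hmean]
  · rw [hexp, integral_finset_sum _ (fun j _ => integrable_finset_sum _
      fun k _ => (hprod j k).const_mul _)]
    have : ∀ j : Fin q, ∫ ω, ∑ k, (c j * c k) * (v j ω * v k ω) ∂μ = c j ^ 2 * 2 := by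
      intro j
      rw [integral_finset_sum _ (fun k _ => (hprod j k).const_mul _)]
      have : ∀ k : Fin q, ∫ ω, (c j * c k) * (v j ω * v k ω) ∂μ =
          if j = k then c j ^ 2 * 2 else 0 := by
        intro k
        rw [integral_const_mul, hIjk j k]
        by_cases hjk : j = k
        · subst hjk; simp [sq]
        · simp [hjk]
      simp [this]
    rw [Finset.sum_congr rfl fun j _ => this j, Finset.mul_sum]
    exact Finset.sum_congr rfl fun j _ => by ring

end moments
lemma g_right_deriv {Ω : Type*} [MeasurableSpace Ω] {μ : Measure Ω} [IsProbabilityMeasure μ]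
    {S : Ω → ℝ} (hSm : Measurable S)
    (hS1 : Integrable S μ) (hS2 : Integrable (fun ω => S ω ^ 2) μ)
    (hS3 : Integrable (fun ω => |S ω| ^ 3) μ)
    (hmean : ∫ ω, S ω ∂μ = 0) {V : ℝ} (hvar : ∫ ω, S ω ^ 2 ∂μ = V) (a : ℝ) :
    Tendsto (fun θ => ((∫ ω, sig (a + Real.sqrt θ * S ω) ∂μ) -
        (∫ ω, sig (a + Real.sqrt 0 * S ω) ∂μ)) / θ)
      (nhdsWithin 0 (Set.Ioi 0)) (nhds (sig2 a / 2 * V)) := by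
  set M : ℝ := ∫ ω, |S ω| ^ 3 ∂μ with hM
  set c : ℝ := sig2 a / 2 * V with hc
  have hG0 : (∫ ω, sig (a + Real.sqrt 0 * S ω) ∂μ) = sig a := by
    simp [Real.sqrt_zero]
  have key : ∀ θ : ℝ, θ ∈ Set.Ioi (0:ℝ) →
      |((∫ ω, sig (a + Real.sqrt θ * S ω) ∂μ) -
        (∫ ω, sig (a + Real.sqrt 0 * S ω) ∂μ)) / θ - c| ≤ Real.sqrt θ * M := by
    intro θ hθ
    have hθ0 : (0:ℝ) < θ := hθ
    set s : ℝ := Real.sqrt θ with hs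
    have hspos : 0 < s := Real.sqrt_pos.2 hθ0
    have hs2 : s ^ 2 = θ := Real.sq_sqrt hθ0.le
    have Isig : Integrable (fun ω => sig (a + s * S ω)) μ := by
      apply (integrable_const (1:ℝ)).mono'
        ((continuous_sig.measurable.comp
          (measurable_const.add (measurable_const.mul hSm))).aestronglyMeasurable)
      filter_upwards with ω
      simp only [Function.comp_apply, Real.norm_eq_abs]
      rw [abs_of_nonneg (sig_pos _).le]
      exact (sig_lt_one _).le
    set R : Ω → ℝ := fun ω => sig (a + s * S ω) - sig a - (sig1 a * s) * S ω -
      (sig2 a / 2 * s ^ 2) * S ω ^ 2 with hR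
    have IA : Integrable (fun ω => sig (a + s * S ω) - sig a) μ :=
      Isig.sub (integrable_const _)
    have IB : Integrable (fun ω => (sig1 a * s) * S ω) μ := hS1.const_mul _
    have IC : Integrable (fun ω => sig (a + s * S ω) - sig a - (sig1 a * s) * S ω) μ :=
      IA.sub IB
    have ID : Integrable (fun ω => (sig2 a / 2 * s ^ 2) * S ω ^ 2) μ := hS2.const_mul _
    have IR : Integrable R μ := IC.sub ID
    have hint : ∫ ω, R ω ∂μ = (∫ ω, sig (a + s * S ω) ∂μ) - sig a - θ * c := by
      rw [hR]
      rw [integral_sub IC ID, integral_sub IA IB,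
        integral_sub Isig (integrable_const (sig a)),
        integral_const_mul, integral_const_mul, hmean, hvar, integral_const]
      simp only [measure_univ, probReal_univ, ENNReal.toReal_one, one_smul, mul_zero, sub_zero]
      rw [hc, hs2]; ring
    have hRbound : ∀ ω, |R ω| ≤ s ^ 3 * |S ω| ^ 3 := by
      intro ω
      have := sig_taylor a (s * S ω)
      have heq : R ω = sig (a + s * S ω) - sig a - sig1 a * (s * S ω) -
          sig2 a / 2 * (s * S ω) ^ 2 := by rw [hR]; ring
      rw [heq]
      calc |sig (a + s * S ω) - sig a - sig1 a * (s * S ω) - sig2 a / 2 * (s * S ω) ^ 2|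
          ≤ |s * S ω| ^ 3 := this
        _ = s ^ 3 * |S ω| ^ 3 := by
            rw [abs_mul, mul_pow, abs_of_pos hspos]
    have hIRbound : |∫ ω, R ω ∂μ| ≤ s ^ 3 * M := by
      calc |∫ ω, R ω ∂μ| ≤ ∫ ω, |R ω| ∂μ := by
            simpa [Real.norm_eq_abs] using norm_integral_le_integral_norm (μ := μ) R
        _ ≤ ∫ ω, s ^ 3 * |S ω| ^ 3 ∂μ := by
            apply integral_mono IR.abs (hS3.const_mul _) hRbound
        _ = s ^ 3 * M := by rw [integral_const_mul]
    rw [hG0]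
    have hθne : θ ≠ 0 := hθ0.ne'
    have hquot : ((∫ ω, sig (a + s * S ω) ∂μ) - sig a) / θ - c = (∫ ω, R ω ∂μ) / θ := by
      field_simp
      linarith [hint]
    rw [hquot, abs_div, abs_of_pos hθ0]
    rw [div_le_iff₀ hθ0]
    calc |∫ ω, R ω ∂μ| ≤ s ^ 3 * M := hIRbound
      _ = s * M * θ := by rw [← hs2]; ring
  have hb : Tendsto (fun θ => Real.sqrt θ * M) (nhdsWithin 0 (Set.Ioi 0)) (nhds 0) := by
    have h1 : Tendsto Real.sqrt (nhdsWithin 0 (Set.Ioi 0)) (nhds 0) := by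
      simpa [Real.sqrt_zero] using
        ((Real.continuous_sqrt.tendsto 0).mono_left nhdsWithin_le_nhds)
    simpa using h1.mul_const M
  apply tendsto_sub_nhds_zero_iff.1
  apply squeeze_zero_norm' _ hb
  filter_upwards [eventually_mem_nhdsWithin] with θ hθ
  simpa [Real.norm_eq_abs] using key θ hθ


/-- The prospective log-likelihood `ℓ(θ) = ∑ᵢ [Dᵢ log gᵢ(θ) + (1−Dᵢ) log(1−gᵢ(θ))]`,
with `gᵢ(θ) = E[π(ηᵢ + √θ·yᵢᵀv)]` for the logistic function `π` and a random vector `v`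
with i.i.d. components of mean `0` and variance `2` (and `E[|yᵢᵀv|³] < ∞`),
has right derivative at `θ = 0` equal to
`∑ᵢ (Dᵢ − π(ηᵢ))(1 − 2π(ηᵢ)) · yᵢᵀyᵢ`. -/
theorem prospective_score_right_derivative
    (pi : ℝ → ℝ) (hpi : ∀ s, pi s = Real.exp s / (1 + Real.exp s))
    {Ω : Type*} [MeasurableSpace Ω] (μ : Measure Ω) [IsProbabilityMeasure μ]
    {q : ℕ} (v : Fin q → Ω → ℝ)
    (hmeas : ∀ j, Measurable (v j))
    (hindep : iIndepFun v μ)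
    (hident : ∀ i j, μ.map (v i) = μ.map (v j))
    (hmean : ∀ j, ∫ ω, v j ω ∂μ = 0)
    (hvar : ∀ j, ∫ ω, (v j ω) ^ 2 ∂μ = 2)
    {d n : ℕ} (x : Fin n → (Fin d → ℝ)) (y : Fin n → (Fin q → ℝ))
    (D : Fin n → ℝ) (hD : ∀ i, D i = 0 ∨ D i = 1)
    (α_p : ℝ) (β : Fin d → ℝ) (γ : ℝ)
    (η : Fin n → ℝ)
    (hη : ∀ i, η i = α_p + (∑ a, β a * x i a) + γ * ∑ j, y i j)
    (hthird : ∀ i, Integrable (fun ω => |∑ j, y i j * v j ω| ^ 3) μ)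
    (g : Fin n → ℝ → ℝ)
    (hg : ∀ i θ, g i θ = ∫ ω, pi (η i + Real.sqrt θ * ∑ j, y i j * v j ω) ∂μ)
    (ℓ : ℝ → ℝ)
    (hℓ : ∀ θ, ℓ θ = ∑ i, (D i * Real.log (g i θ) + (1 - D i) * Real.log (1 - g i θ))) :
    Tendsto (fun θ => (ℓ θ - ℓ 0) / θ) (nhdsWithin 0 (Set.Ioi 0))
      (nhds (∑ i, (D i - pi (η i)) * (1 - 2 * pi (η i)) * ∑ j, (y i j) ^ 2)) := by
  have hpe : ∀ s, pi s = sig s := fun s => hpi s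
  have hgθ : ∀ i θ, g i θ = ∫ ω, sig (η i + Real.sqrt θ * ∑ j, y i j * v j ω) ∂μ := by
    intro i θ; rw [hg i θ]; simp only [hpe]
  have hSmeas : ∀ i, Measurable (fun ω => ∑ j, y i j * v j ω) := fun i =>
    Finset.measurable_sum _ (fun j _ => (hmeas j).const_mul (y i j))
  have hmom := fun i => moments v hmeas hindep hmean hvar (y i)
  -- right derivative of each g i
  have hgd : ∀ i, HasDerivWithinAt (g i) (sig2 (η i) * ∑ j, (y i j) ^ 2) (Set.Ioi 0) 0 := by
    intro i
    have htd := g_right_deriv (hSmeas i) (hmom i).1 (hmom i).2.1 (hthird i)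
      (hmom i).2.2.1 (hmom i).2.2.2 (η i)
    have heq : (fun θ => (g i θ - g i 0) / θ) = fun θ =>
        ((∫ ω, sig (η i + Real.sqrt θ * ∑ j, y i j * v j ω) ∂μ) -
         (∫ ω, sig (η i + Real.sqrt 0 * ∑ j, y i j * v j ω) ∂μ)) / θ := by
      funext θ; rw [hgθ i θ, hgθ i 0]
    have htd2 : Tendsto (fun θ => (g i θ - g i 0) / θ) (nhdsWithin 0 (Set.Ioi 0))
        (nhds (sig2 (η i) * ∑ j, (y i j) ^ 2)) := by
      rw [heq]
      convert htd using 2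
      ring
    rw [hasDerivWithinAt_iff_tendsto_slope,
      Set.diff_singleton_eq_self (show (0:ℝ) ∉ Set.Ioi 0 from fun h => lt_irrefl (0:ℝ) h)]
    have hslope : slope (g i) 0 = fun θ => (g i θ - g i 0) / θ := by
      funext θ; rw [slope_def_field]; rw [sub_zero]
    rw [hslope]
    exact htd2
  have hg0 : ∀ i, g i 0 = sig (η i) := by
    intro i; rw [hgθ i 0]; simp [Real.sqrt_zero]
  -- per-term derivative
  have hterm : ∀ i, HasDerivWithinAt
      (fun θ => D i * Real.log (g i θ) + (1 - D i) * Real.log (1 - g i θ))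
      ((D i - sig (η i)) * (1 - 2 * sig (η i)) * ∑ j, (y i j) ^ 2) (Set.Ioi 0) 0 := by
    intro i
    rcases hD i with h0 | h1
    · rw [h0]
      simp only [zero_mul, sub_zero, one_mul, zero_add]
      have hne : (1 - g i 0) ≠ 0 := by
        rw [hg0 i]; have := sig_lt_one (η i); linarith
      have h1' : HasDerivWithinAt (fun θ => 1 - g i θ)
          (-(sig2 (η i) * ∑ j, (y i j) ^ 2)) (Set.Ioi 0) 0 := (hgd i).const_sub 1
      have hlog := (Real.hasDerivAt_log hne).comp_hasDerivWithinAt 0 h1'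
      refine hlog.congr_deriv ?_
      rw [hg0 i]
      have h2 := sig_lt_one (η i)
      have hne' : (1 - sig (η i)) ≠ 0 := by linarith
      simp only [sig2, sig1]
      rw [zero_sub]
      field_simp
    · rw [h1]
      simp only [one_mul, sub_self, zero_mul, add_zero]
      have hne : g i 0 ≠ 0 := by
        rw [hg0 i]; exact (sig_pos (η i)).ne'
      have hlog := (Real.hasDerivAt_log hne).comp_hasDerivWithinAt 0 (hgd i)
      refine hlog.congr_deriv ?_
      rw [hg0 i]
      have hne' : sig (η i) ≠ 0 := (sig_pos (η i)).ne'
      simp only [sig2, sig1]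
      field_simp
  have hsum : HasDerivWithinAt (fun θ => ∑ i,
      (D i * Real.log (g i θ) + (1 - D i) * Real.log (1 - g i θ)))
      (∑ i, (D i - sig (η i)) * (1 - 2 * sig (η i)) * ∑ j, (y i j) ^ 2) (Set.Ioi 0) 0 :=
    HasDerivWithinAt.fun_sum (fun i _ => hterm i)
  have hℓeq : ℓ = fun θ => ∑ i,
      (D i * Real.log (g i θ) + (1 - D i) * Real.log (1 - g i θ)) := funext hℓ
  have hld : HasDerivWithinAt ℓ
      (∑ i, (D i - sig (η i)) * (1 - 2 * sig (η i)) * ∑ j, (y i j) ^ 2) (Set.Ioi 0) 0 := by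
    rw [hℓeq]; exact hsum
  rw [hasDerivWithinAt_iff_tendsto_slope,
    Set.diff_singleton_eq_self (show (0:ℝ) ∉ Set.Ioi 0 from fun h => lt_irrefl (0:ℝ) h)] at hld
  have hslope : slope ℓ 0 = fun θ => (ℓ θ - ℓ 0) / θ := by
    funext θ; rw [slope_def_field]; rw [sub_zero]
  rw [hslope] at hld
  simp only [hpe]
  exact hld
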